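/- arXiv:2311.03949 — 2 statements merged into one kernel-verified Lean document; each statement's English description precedes it below -/
import Mathlib

section
/- One-step exponential QSP: Let γ(z) = ∑_{k=0}^{d−1} γ_k z^k be a ℂ^d-valued polynomial with ‖γ(z)‖ = 1 for all z on the unit circle. There exist unitaries A_0, A_1 ∈ U(d) with A_1 W_d A_0 e_0 = γ(z) for all |z| = 1, where W_d = diag(1, z, z², …, z^{d−1}), if and only if the coefficient vectors γ_0, …, γ_{d−1} are pairwise orthogonal. -/
open Matrix

private theorem qsp_circle_infinite : ({z : ℂ | ‖z‖ = 1} : Set ℂ).Infinite := by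
  have h2 : (1:ℝ) ≤ Real.pi / 2 := by
    have := Real.pi_gt_three; linarith
  have hinj : Set.InjOn (fun t : ℝ => Complex.exp (t * Complex.I)) (Set.Ioo 0 1) := by
    intro x hx y hy hxy
    have hx' : Real.sin x = Real.sin y := by
      have := congrArg Complex.im hxy
      simpa [Complex.exp_ofReal_mul_I_im] using this
    exact Real.injOn_sin ⟨by linarith [hx.1, Real.pi_pos], by linarith [hx.2]⟩
      ⟨by linarith [hy.1, Real.pi_pos], by linarith [hy.2]⟩ hx'
  have hsub : (fun t : ℝ => Complex.exp (t * Complex.I)) '' (Set.Ioo 0 1) ⊆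
      {z : ℂ | ‖z‖ = 1} := by
    rintro z ⟨t, _, rfl⟩
    simp [Complex.norm_exp_ofReal_mul_I]
  exact Set.Infinite.mono hsub ((Set.Ioo_infinite (by norm_num)).image hinj)

private theorem qsp_coeff_eq {d : ℕ} (a b : Fin d → ℂ)
    (h : ∀ z : ℂ, ‖z‖ = 1 →
      ∑ k : Fin d, a k * z ^ (k:ℕ) = ∑ k : Fin d, b k * z ^ (k:ℕ)) : a = b := by
  set p : Polynomial ℂ := ∑ k : Fin d, Polynomial.C (a k - b k) * Polynomial.X ^ (k:ℕ) with hp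
  have hroot : ∀ z ∈ {z : ℂ | ‖z‖ = 1}, p.IsRoot z := by
    intro z hz
    have := h z hz
    simp only [Polynomial.IsRoot, hp, Polynomial.eval_finset_sum, Polynomial.eval_mul,
      Polynomial.eval_C, Polynomial.eval_pow, Polynomial.eval_X, sub_mul,
      Finset.sum_sub_distrib, this, sub_self]
  have hp0 : p = 0 :=
    Polynomial.eq_zero_of_infinite_isRoot p
      (qsp_circle_infinite.mono fun z hz => hroot z hz)
  funext j
  have hco := congrArg (fun q : Polynomial ℂ => q.coeff (j:ℕ)) hp0
  simp only [hp, Polynomial.finset_sum_coeff, Polynomial.coeff_C_mul, Polynomial.coeff_X_pow,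
    Polynomial.coeff_zero, mul_ite, mul_one, mul_zero] at hco
  have h2 : (∑ x : Fin d, if x = j then a x - b x else 0) = 0 := by
    rw [← hco]; apply Finset.sum_congr rfl; intro x _
    congr 1
    simp [Fin.ext_iff, eq_comm]
  rw [Finset.sum_ite_eq' Finset.univ j] at h2
  simp only [Finset.mem_univ, if_pos] at h2
  exact sub_eq_zero.mp h2

private theorem qsp_columns_unitary {d : ℕ}
    (b : OrthonormalBasis (Fin d) ℂ (EuclideanSpace ℂ (Fin d))) :
    Matrix.of (fun i k : Fin d => b k i) ∈ Matrix.unitaryGroup (Fin d) ℂ := by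
  rw [Matrix.mem_unitaryGroup_iff']
  ext j k
  have := (orthonormal_iff_ite.mp b.orthonormal) j k
  simp only [PiLp.inner_apply, RCLike.inner_apply] at this
  simp [Matrix.mul_apply, Matrix.one_apply, Matrix.star_apply, Matrix.of_apply, this]
  rw [← this]; exact Finset.sum_congr rfl fun _ _ => mul_comm _ _

private theorem qsp_mulVec_e0 {d : ℕ} (hd : 1 ≤ d) (M : Matrix (Fin d) (Fin d) ℂ) (i : Fin d) :
    M.mulVec (fun i : Fin d => if (i : ℕ) = 0 then 1 else 0) i = M i ⟨0, hd⟩ := by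
  simp only [Matrix.mulVec, dotProduct]
  rw [Finset.sum_eq_single ⟨0, hd⟩]
  · simp
  · intro b _ hb; simp [Fin.ext_iff] at hb ⊢; tauto
  · simp

private theorem qsp_sumsq {d : ℕ} (γ : Fin d → Fin d → ℂ) (n : Fin d → ℝ)
    (hn2 : ∀ k, (n k)^2 = ∑ i, ‖γ k i‖ ^ 2)
    (horth : ∀ j k : Fin d, j ≠ k → ∑ i : Fin d, (starRingEnd ℂ) (γ j i) * γ k i = 0)
    (h1 : ∑ i : Fin d, ‖∑ k : Fin d, γ k i * (1:ℂ) ^ (k : ℕ)‖ ^ 2 = 1) :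
    ∑ k, n k ^ 2 = 1 := by
  simp only [one_pow, mul_one] at h1
  have habs : ∀ x : ℂ, (starRingEnd ℂ) x * x = ((‖x‖ : ℝ) : ℂ) ^ 2 := fun x => by
    rw [mul_comm, Complex.mul_conj, ← Complex.sq_norm]
    push_cast; ring
  have key : ∀ j : Fin d, ∑ k : Fin d, ∑ i : Fin d, (starRingEnd ℂ) (γ j i) * γ k i
      = ∑ i : Fin d, (starRingEnd ℂ) (γ j i) * γ j i := fun j =>
    Finset.sum_eq_single j (fun k _ hk => horth j k (Ne.symm hk)) (by simp)
  have hC : ((∑ k, n k ^ 2 : ℝ) : ℂ) = ((1 : ℝ) : ℂ) := by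
    calc ((∑ k, n k ^ 2 : ℝ) : ℂ)
        = ∑ k, ∑ i, (starRingEnd ℂ) (γ k i) * γ k i := by
          push_cast
          refine Finset.sum_congr rfl fun k _ => ?_
          have h2 : ((n k : ℂ))^2 = ∑ i, ((‖γ k i‖ : ℝ) : ℂ)^2 := by
            rw [show ((n k : ℂ))^2 = ((n k ^ 2 : ℝ) : ℂ) by push_cast; ring, hn2 k]
            push_cast; ring
          rw [h2]
          exact Finset.sum_congr rfl fun i _ => (habs _).symm
      _ = ∑ k : Fin d, ∑ j : Fin d, ∑ i : Fin d, (starRingEnd ℂ) (γ k i) * γ j i :=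
          Finset.sum_congr rfl fun k _ => (key k).symm
      _ = ∑ i : Fin d, (starRingEnd ℂ) (∑ k, γ k i) * (∑ j, γ j i) := by
          have hexp : ∀ i : Fin d, (starRingEnd ℂ) (∑ k, γ k i) * (∑ j, γ j i)
              = ∑ k : Fin d, ∑ j : Fin d, (starRingEnd ℂ) (γ k i) * γ j i := by
            intro i; rw [map_sum, Finset.sum_mul_sum]
          rw [Finset.sum_congr rfl fun i (_ : i ∈ Finset.univ) => hexp i]
          exact (Finset.sum_congr rfl fun _ _ => Finset.sum_comm).trans Finset.sum_comm
      _ = ((1:ℝ) : ℂ) := by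
          rw [← h1]
          push_cast
          exact Finset.sum_congr rfl fun i _ => habs _
  exact_mod_cast hC

private theorem qsp_sum_diag {d : ℕ} (f w : Fin d → ℂ) (k : Fin d) :
    ∑ j : Fin d, f j * Matrix.diagonal w j k = f k * w k := by
  rw [Finset.sum_eq_single k]
  · rw [Matrix.diagonal_apply_eq]
  · intro j _ hj; rw [Matrix.diagonal_apply_ne _ hj, mul_zero]
  · simp

theorem one_step_exponential_qsp (d : ℕ) (hd : 1 ≤ d)
    (γ : Fin d → Fin d → ℂ)
    (hstate : ∀ z : ℂ, ‖z‖ = 1 →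
      ∑ i : Fin d, ‖∑ k : Fin d, γ k i * z ^ (k : ℕ)‖ ^ 2 = 1) :
    (∃ A₀ ∈ Matrix.unitaryGroup (Fin d) ℂ, ∃ A₁ ∈ Matrix.unitaryGroup (Fin d) ℂ,
        ∀ z : ℂ, ‖z‖ = 1 →
          (A₁ * Matrix.diagonal (fun i : Fin d => z ^ (i : ℕ)) * A₀).mulVec
              (fun i : Fin d => if (i : ℕ) = 0 then 1 else 0) =
            fun i : Fin d => ∑ k : Fin d, γ k i * z ^ (k : ℕ)) ↔
      (∀ j k : Fin d, j ≠ k → ∑ i : Fin d, (starRingEnd ℂ) (γ j i) * γ k i = 0) := by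
  constructor
  · rintro ⟨A₀, hA₀, A₁, hA₁, h⟩
    -- γ k i = A₁ i k * A₀ k 0
    have heq : ∀ i k : Fin d, γ k i = A₁ i k * A₀ k ⟨0, hd⟩ := by
      intro i
      have := qsp_coeff_eq (fun k => γ k i) (fun k => A₁ i k * A₀ k ⟨0, hd⟩) ?_
      · exact fun k => congrFun this k
      intro z hz
      have h1 := congrFun (h z hz) i
      rw [qsp_mulVec_e0 hd] at h1
      rw [← h1]
      simp only [Matrix.mul_apply]
      refine Finset.sum_congr rfl fun k _ => ?_
      rw [qsp_sum_diag]
      ring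
    intro j k hjk
    have hu : star A₁ * A₁ = 1 := Matrix.mem_unitaryGroup_iff'.mp hA₁
    have h2 : ∑ i : Fin d, (starRingEnd ℂ) (A₁ i j) * A₁ i k = 0 := by
      have := congrFun (congrFun hu j) k
      simpa [Matrix.mul_apply, Matrix.one_apply, hjk, Matrix.star_apply] using this
    calc ∑ i : Fin d, (starRingEnd ℂ) (γ j i) * γ k i
        = ((starRingEnd ℂ) (A₀ j ⟨0,hd⟩) * A₀ k ⟨0,hd⟩) *
          ∑ i : Fin d, (starRingEnd ℂ) (A₁ i j) * A₁ i k := by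
          rw [Finset.mul_sum]; apply Finset.sum_congr rfl; intro i _
          rw [heq i j, heq i k]
          simp only [_root_.map_mul]
          ring
      _ = 0 := by rw [h2, mul_zero]
  · intro horth
    set g : Fin d → EuclideanSpace ℂ (Fin d) := fun k => WithLp.toLp 2 (fun i => γ k i) with hg
    set n : Fin d → ℝ := fun k => ‖g k‖ with hn
    have hn2 : ∀ k, (n k)^2 = ∑ i, ‖γ k i‖ ^ 2 := by
      intro k
      rw [hn]
      simp only
      rw [EuclideanSpace.norm_eq, Real.sq_sqrt (by positivity)]
    have hnnonneg : ∀ k, 0 ≤ n k := fun k => norm_nonneg _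
    have hsum1 : ∑ k, n k ^ 2 = 1 := qsp_sumsq γ n hn2 horth (hstate 1 (by simp))
    -- build A₁ from orthonormal extension of normalized γ's
    set v : Fin d → EuclideanSpace ℂ (Fin d) := fun k => ((n k : ℂ))⁻¹ • g k with hv
    have hgi : ∀ j k : Fin d, j ≠ k → (inner ℂ (g j) (g k) : ℂ) = 0 := by
      intro j k hjk
      simpa [PiLp.inner_apply, RCLike.inner_apply, mul_comm] using horth j k hjk
    have hvo : Orthonormal ℂ (Set.restrict {k | g k ≠ 0} v) := by
      rw [orthonormal_iff_ite]
      rintro ⟨j, hj⟩ ⟨k, hk⟩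
      by_cases hjk : j = k
      · subst hjk
        simp only [Set.restrict_apply, Set.restrict, ↓reduceIte, hv]
        rw [inner_smul_left, inner_smul_right, inner_self_eq_norm_sq_to_K]
        rw [Complex.conj_inv, Complex.conj_ofReal]
        have hne : ((n j : ℝ) : ℂ) ≠ 0 := by
          simpa [hn] using (norm_ne_zero_iff.mpr hj)
        field_simp
        rfl
      · have hne : (⟨j,hj⟩ : {k | g k ≠ 0}) ≠ ⟨k, hk⟩ := by simp [hjk]
        rw [if_neg hne]
        simp only [Set.restrict_apply, Set.restrict, hv]
        rw [inner_smul_left, inner_smul_right, hgi j k hjk]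
        ring
    obtain ⟨b, hb⟩ := hvo.exists_orthonormalBasis_extension_of_card_eq (by simp)
    have hbk : ∀ k i : Fin d, (n k : ℂ) * b k i = γ k i := by
      intro k i
      by_cases hk : g k ≠ 0
      · rw [hb k hk]
        have hne : ((n k : ℝ) : ℂ) ≠ 0 := by
          simpa [hn] using (norm_ne_zero_iff.mpr hk)
        simp only [hv, PiLp.smul_apply, smul_eq_mul]
        have : (g k) i = γ k i := rfl
        rw [this]
        field_simp
      · push_neg at hk
        have h1 : γ k i = 0 := congrArg (fun v : EuclideanSpace ℂ (Fin d) => v i) hk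
        have h2 : n k = 0 := by rw [hn]; simp [hk]
        rw [h1, h2]
        simp
    -- build A₀ sending e₀ to the vector of norms
    set u : EuclideanSpace ℂ (Fin d) := WithLp.toLp 2 (fun k => ((n k : ℝ) : ℂ)) with hu
    have hunorm : ‖u‖ = 1 := by
      rw [EuclideanSpace.norm_eq]
      have : ∀ k, ‖u k‖ ^ 2 = n k ^ 2 := by
        intro k
        simp [hu, Complex.norm_real, abs_of_nonneg (hnnonneg k), sq_abs]
      rw [Finset.sum_congr rfl fun k _ => this k, hsum1, Real.sqrt_one]
    have huo : Orthonormal ℂ (Set.restrict {(⟨0, hd⟩ : Fin d)} (fun _ : Fin d => u)) := by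
      rw [orthonormal_iff_ite]
      rintro ⟨j, hj⟩ ⟨k, hk⟩
      simp only [Set.mem_singleton_iff] at hj hk
      have heq : (⟨j,hj⟩ : ({(⟨0, hd⟩ : Fin d)} : Set (Fin d))) = ⟨k, hk⟩ := by
        subst hj; subst hk; rfl
      rw [if_pos heq, heq]
      simp [Set.restrict, inner_self_eq_norm_sq_to_K, hunorm]
    obtain ⟨c, hc⟩ := huo.exists_orthonormalBasis_extension_of_card_eq (by simp)
    have hc0 : c ⟨0, hd⟩ = u := hc ⟨0, hd⟩ rfl
    refine ⟨Matrix.of (fun i k : Fin d => c k i), qsp_columns_unitary c,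
      Matrix.of (fun i k : Fin d => b k i), qsp_columns_unitary b, ?_⟩
    intro z hz
    funext i
    rw [qsp_mulVec_e0 hd]
    simp only [Matrix.mul_apply, Matrix.of_apply]
    refine Finset.sum_congr rfl fun k _ => ?_
    have hck : c ⟨0, hd⟩ k = ((n k : ℝ) : ℂ) := by rw [hc0]
    rw [qsp_sum_diag, hck, ← hbk k i]
    ring
end

section
/- Discrete–continuous Fourier duality for wrapped functions: Let f : ℝ → ℂ be a Schwartz function, N a positive integer, and T, W > 0 with TW = 2πN. Define the T-wrapping f^{(T)}(x) = ∑_{n∈ℤ} f(x + nT) and the continuous Fourier transform f̂(p) = (1/√(2π)) ∫_ℝ f(x) e^{−ipx} dx. Then for every k ∈ ℤ/Nℤ: √T · (1/√N) ∑_{y=0}^{N−1} f^{(T)}(yT/N) ω_N^{−ky} = √W · f̂^{(W)}(kW/N), where ω_N = e^{2πi/N}. -/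
open Complex MeasureTheory

/-- Periodization (`T`-wrapping) of a function `f : ℝ → ℂ`. -/
noncomputable def wrap (T : ℝ) (f : ℝ → ℂ) (x : ℝ) : ℂ :=
  ∑' n : ℤ, f (x + n * T)

/-- Continuous Fourier transform with the symmetric convention. -/
noncomputable def fourierCT (f : ℝ → ℂ) (p : ℝ) : ℂ :=
  (1 / Real.sqrt (2 * Real.pi)) * ∫ x : ℝ, f x * Complex.exp (-(Complex.I * p * x))

open FourierTransform Real Filter Asymptotics

/-- Scaling by a nonzero constant as a continuous linear equivalence of `ℝ`. -/
noncomputable def mulEquivCLE (T : ℝ) (hT : T ≠ 0) : ℝ ≃L[ℝ] ℝ :=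
  { toFun := fun x => T * x
    invFun := fun x => T⁻¹ * x
    map_add' := fun x y => by ring
    map_smul' := fun c x => by simp; ring
    left_inv := fun x => by field_simp
    right_inv := fun x => by field_simp
    continuous_toFun := (continuous_const.mul continuous_id)
    continuous_invFun := (continuous_const.mul continuous_id) }

/-- Orthogonality of characters on `ℤ/N`. -/
lemma charSum (N : ℕ) (hN : 0 < N) (j : ℤ) :
    ∑ y ∈ Finset.range N, Complex.exp (2 * Real.pi * Complex.I * j * y / N)
      = if (N:ℤ) ∣ j then (N:ℂ) else 0 := by
  have hNC : (N:ℂ) ≠ 0 := Nat.cast_ne_zero.mpr hN.ne'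
  set z : ℂ := Complex.exp (2 * Real.pi * Complex.I * j / N) with hz
  have hterm : ∀ y ∈ Finset.range N,
      Complex.exp (2 * Real.pi * Complex.I * j * y / N) = z ^ y := by
    intro y _
    rw [hz, ← Complex.exp_nat_mul]
    congr 1
    field_simp
  rw [Finset.sum_congr rfl hterm]
  by_cases hdvd : (N:ℤ) ∣ j
  · obtain ⟨c, hc⟩ := hdvd
    have hz1 : z = 1 := by
      rw [hz, hc]
      rw [show (2 * Real.pi * Complex.I * (((N:ℤ) * c : ℤ) : ℂ) / N : ℂ)
          = (c:ℤ) * (2 * Real.pi * Complex.I) by push_cast; field_simp]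
      exact Complex.exp_int_mul_two_pi_mul_I c
    have hdj : (N:ℤ) ∣ j := ⟨c, hc⟩
    simp [hz1, hdj]
  · have hzN : z ^ N = 1 := by
      rw [hz, ← Complex.exp_nat_mul]
      rw [show (N:ℂ) * (2 * Real.pi * Complex.I * j / N) = (j:ℤ) * (2 * Real.pi * Complex.I) by
        push_cast; field_simp]
      exact Complex.exp_int_mul_two_pi_mul_I j
    have hz1 : z ≠ 1 := by
      intro h
      rw [hz, Complex.exp_eq_one_iff] at h
      obtain ⟨n, hn⟩ := h
      apply hdvd
      refine ⟨n, ?_⟩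
      have hπ : (Real.pi : ℂ) ≠ 0 := Complex.ofReal_ne_zero.mpr Real.pi_ne_zero
      have hj : (j:ℂ) = N * n := by
        field_simp at hn
        have h2piI : (2 * (Real.pi:ℂ) * Complex.I) ≠ 0 := by
          simp [Real.pi_ne_zero, Complex.I_ne_zero, Complex.ofReal_ne_zero]
        have hq : (2 * (Real.pi:ℂ) * Complex.I) * j
            = (2 * (Real.pi:ℂ) * Complex.I) * (N * n) := by
          linear_combination (2 * (Real.pi:ℂ) * Complex.I) * hn
        exact mul_left_cancel₀ h2piI hq
      exact_mod_cast hj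
    rw [geom_sum_eq hz1, hzN]
    simp [hdvd]

/-- The Fourier coefficient computation for the scaled Schwartz function. -/
lemma coefKey (f : SchwartzMap ℝ ℂ) (N : ℕ) (hN : 0 < N) (T W : ℝ) (hT : 0 < T)
    (hTW : T * W = 2 * Real.pi * N) (m : ℤ) :
    (SchwartzMap.fourierTransformCLM ℝ
        (SchwartzMap.compCLMOfContinuousLinearEquiv ℝ (mulEquivCLE T hT.ne') f)) m
      = ((Real.sqrt (2 * Real.pi) / T : ℝ) : ℂ) * fourierCT f (m * W / N) := by
  set g := SchwartzMap.compCLMOfContinuousLinearEquiv ℝ (mulEquivCLE T hT.ne') f with hgdef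
  have hg : ∀ x : ℝ, g x = f (T * x) := fun x => rfl
  set p : ℝ := m * W / N with hp
  set h : ℝ → ℂ := fun u => f u * Complex.exp (-(Complex.I * p * u)) with hh
  have key : (fun v : ℝ => Complex.exp (↑(-2 * Real.pi * v * m) * Complex.I) • g v)
      = fun v : ℝ => h (T * v) := by
    funext v
    rw [hg, hh, smul_eq_mul, mul_comm]
    congr 2
    have hpT : p * T = 2 * Real.pi * m := by
      rw [hp]; field_simp
      linear_combination (m : ℝ) * hTW
    have hc : (p : ℂ) * T = 2 * Real.pi * m := by exact_mod_cast congrArg Complex.ofReal hpT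
    push_cast
    linear_combination ((v:ℂ) * Complex.I) * hc
  rw [SchwartzMap.fourierTransformCLM_apply, SchwartzMap.fourier_coe, Real.fourier_real_eq_integral_exp_smul]
  rw [show (fun v : ℝ => Complex.exp (↑(-2 * Real.pi * v * m) * Complex.I) • g v)
      = fun v : ℝ => h (T * v) from key]
  rw [MeasureTheory.Measure.integral_comp_mul_left h T, abs_of_pos (inv_pos.mpr hT)]
  rw [fourierCT]
  have hs : Real.sqrt (2 * Real.pi) ≠ 0 := by positivity
  rw [real_smul]
  push_cast
  rw [← hh, ← mul_assoc]
  congr 1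
  rw [← Complex.ofReal_inv]
  have h2 : (Real.sqrt 2 : ℂ) ≠ 0 := by
    exact_mod_cast (Real.sqrt_ne_zero'.mpr two_pos)
  have hpi : (Real.sqrt Real.pi : ℂ) ≠ 0 := by
    exact_mod_cast (Real.sqrt_ne_zero'.mpr Real.pi_pos)
  have hsC : ((Real.sqrt (2 * Real.pi) : ℝ) : ℂ) ≠ 0 := by exact_mod_cast hs
  field_simp
  simp

theorem discrete_continuous_fourier_duality (f : SchwartzMap ℝ ℂ)
    (N : ℕ) (hN : 0 < N) (T W : ℝ) (hT : 0 < T) (hW : 0 < W)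
    (hTW : T * W = 2 * Real.pi * N) (k : Fin N) :
    (Real.sqrt T : ℂ) * ((1 / Real.sqrt N : ℝ) *
        ∑ y ∈ Finset.range N,
          wrap T f (y * T / N) *
            Complex.exp (-(2 * Real.pi * Complex.I * (k : ℕ) * y / N))) =
      (Real.sqrt W : ℂ) * wrap W (fourierCT f) ((k : ℕ) * W / N) := by
  have hN0 : (N:ℝ) ≠ 0 := Nat.cast_ne_zero.mpr hN.ne'
  have hNC : (N:ℂ) ≠ 0 := Nat.cast_ne_zero.mpr hN.ne'
  set g := SchwartzMap.compCLMOfContinuousLinearEquiv ℝ (mulEquivCLE T hT.ne') f with hgdef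
  have hg : ∀ x : ℝ, g x = f (T * x) := fun x => rfl
  set A : ℤ → ℂ := fun m => (SchwartzMap.fourierTransformCLM ℝ g) m with hA
  have hsc : Summable A :=
    summable_of_isBigO (Real.summable_abs_int_rpow one_lt_two)
      (((SchwartzMap.fourierTransformCLM ℝ g).isBigO_cocompact_rpow (-2)).comp_tendsto
        Int.tendsto_coe_cofinite)
  have hscn : Summable fun m : ℤ => ‖A m‖ := summable_norm_iff.mpr hsc
  -- exp arguments are purely imaginary
  have hnorm1 : ∀ (j : ℤ) (y : ℕ),
      ‖Complex.exp (2 * Real.pi * Complex.I * j * y / N)‖ = 1 := by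
    intro j y
    rw [show (2 * Real.pi * Complex.I * j * y / N : ℂ)
        = ((2 * Real.pi * j * y / N : ℝ) : ℂ) * Complex.I by push_cast; ring]
    simp [Complex.norm_exp]
  -- Poisson summation: the wrapped function as a Fourier series
  have hwrap : ∀ y : ℕ, wrap T f (y * T / N)
      = ∑' m : ℤ, A m * Complex.exp (2 * Real.pi * Complex.I * m * y / N) := by
    intro y
    have h1 : wrap T f (y * T / N) = ∑' n : ℤ, g ((y / N : ℝ) + n) := by
      rw [wrap]
      refine tsum_congr fun n => ?_
      rw [hg]
      congr 1
      field_simp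
    rw [h1, SchwartzMap.tsum_eq_tsum_fourier g ((y : ℝ) / N)]
    refine tsum_congr fun m => ?_
    rw [fourier_coe_apply]
    congr 1
    push_cast
    field_simp
  -- rewrite each term of the finite sum, combining the two exponentials
  have hterm : ∀ y ∈ Finset.range N,
      wrap T f (y * T / N) * Complex.exp (-(2 * Real.pi * Complex.I * (k : ℕ) * y / N))
        = ∑' m : ℤ, A m * Complex.exp (2 * Real.pi * Complex.I * ((m - (k:ℕ) : ℤ) : ℂ) * y / N) := by
    intro y _
    rw [hwrap y, ← tsum_mul_right]
    refine tsum_congr fun m => ?_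
    rw [mul_assoc, ← Complex.exp_add]
    congr 2
    push_cast
    field_simp
    ring
  rw [Finset.sum_congr rfl hterm]
  -- swap the finite sum and the tsum
  have hsummand : ∀ y ∈ Finset.range N, Summable fun m : ℤ =>
      A m * Complex.exp (2 * Real.pi * Complex.I * ((m - (k:ℕ) : ℤ) : ℂ) * y / N) := by
    intro y _
    refine Summable.of_norm ?_
    refine hscn.congr fun m => ?_
    rw [norm_mul, hnorm1 (m - (k:ℕ)) y, mul_one]
  rw [← Summable.tsum_finsetSum hsummand]
  -- evaluate the character sums
  have hchar : ∀ m : ℤ,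
      ∑ y ∈ Finset.range N, A m * Complex.exp (2 * Real.pi * Complex.I * ((m - (k:ℕ) : ℤ) : ℂ) * y / N)
        = A m * (if (N:ℤ) ∣ (m - (k:ℕ)) then (N:ℂ) else 0) := by
    intro m
    rw [← Finset.mul_sum, charSum N hN (m - (k:ℕ))]
  rw [tsum_congr hchar]
  -- reindex the tsum over multiples
  set G : ℤ → ℂ := fun m => A m * (if (N:ℤ) ∣ (m - (k:ℕ)) then (N:ℂ) else 0) with hG
  have hinj : Function.Injective (fun j : ℤ => ((k:ℕ) : ℤ) + j * N) := by
    intro a b hab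
    simp only at hab
    have h1 : a * (N:ℤ) = b * N := by exact add_left_cancel hab
    exact mul_right_cancel₀ (by exact_mod_cast hN.ne') h1
  have hsupp : Function.support G ⊆ Set.range (fun j : ℤ => ((k:ℕ) : ℤ) + j * N) := by
    intro m hm
    rw [Function.mem_support, hG] at hm
    by_cases hd : (N:ℤ) ∣ (m - (k:ℕ))
    · obtain ⟨c, hc⟩ := hd
      refine ⟨c, ?_⟩
      show ((k:ℕ) : ℤ) + c * N = m
      linear_combination -hc
    · simp [hd] at hm
  rw [← hinj.tsum_eq hsupp]
  have hGval : ∀ j : ℤ, G (((k:ℕ) : ℤ) + j * N)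
      = (((Real.sqrt (2 * Real.pi) / T : ℝ) : ℂ) * (N:ℂ))
          * fourierCT f ((k:ℕ) * W / N + j * W) := by
    intro j
    rw [hG]
    simp only
    split_ifs with hd
    swap
    · exact absurd ⟨j, by ring⟩ hd
    rw [hA]
    simp only
    rw [coefKey f N hN T W hT hTW]
    have harg : ((((k:ℕ) : ℤ) + j * N : ℤ) : ℝ) * W / N = (k:ℕ) * W / N + j * W := by
      push_cast
      field_simp
    rw [harg]
    ring
  rw [tsum_congr hGval, tsum_mul_left]
  -- final constants
  rw [wrap]
  have hNpos : (0:ℝ) < N := by exact_mod_cast hN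
  have hconst : Real.sqrt T * (1 / Real.sqrt N) * (Real.sqrt (2 * Real.pi) / T * N)
      = Real.sqrt W := by
    set a := Real.sqrt T * (1 / Real.sqrt N) * (Real.sqrt (2 * Real.pi) / T * N) with hadef
    have ha : 0 ≤ a := by positivity
    have h2pi : Real.sqrt (2 * Real.pi) ^ 2 = 2 * Real.pi := Real.sq_sqrt (by positivity)
    have hTq : Real.sqrt T ^ 2 = T := Real.sq_sqrt hT.le
    have hNq : Real.sqrt (N:ℝ) ^ 2 = N := Real.sq_sqrt (Nat.cast_nonneg N)
    have hsN : Real.sqrt (N:ℝ) ≠ 0 := Real.sqrt_ne_zero'.mpr hNpos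
    have hsq : a ^ 2 = W := by
      have e1 : a ^ 2 = Real.sqrt T ^ 2 * (1 / Real.sqrt (N:ℝ) ^ 2)
          * (Real.sqrt (2 * Real.pi) ^ 2 / T ^ 2 * (N:ℝ) ^ 2) := by rw [hadef]; ring
      rw [hTq, hNq, h2pi] at e1
      rw [e1]
      field_simp
      linear_combination -hTW
    rw [← hsq, Real.sqrt_sq ha]
  have hconstC : (Real.sqrt T : ℂ) * ((1 / Real.sqrt N : ℝ) : ℂ) *
      (((Real.sqrt (2 * Real.pi) / T : ℝ) : ℂ) * (N:ℂ)) = (Real.sqrt W : ℂ) := by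
    exact_mod_cast congrArg Complex.ofReal hconst
  rw [← mul_assoc, ← mul_assoc, hconstC]
end
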